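/- Let p and q be odd prime numbers with p ≡ 1 (mod 4) and with the residue class of q in ℤ/pℤ not a square. Then: (i) for every prime number ℓ there exist a unit t of ℤ_ℓ and x, y, z ∈ ℤ_ℓ, not all divisible by ℓ, with t·z² = p·x² + q·y²; (ii) there exist ε ∈ {1, −1} and real numbers (x, y, z) ≠ (0, 0, 0) with ε·z² = p·x² + q·y²; and yet (iii) for each ε ∈ {1, −1}, the only rational triple (x, y, z) with ε·z² = p·x² + q·y² is (0, 0, 0). -/
import Mathlib

lemma key (p q : ℕ) (hp : p.Prime) (hqns : ¬IsSquare ((q : ZMod p))) :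
    ∀ n : ℕ, ∀ x y z : ℤ, x.natAbs + y.natAbs + z.natAbs = n →
      z ^ 2 = (p : ℤ) * x ^ 2 + (q : ℤ) * y ^ 2 → x = 0 ∧ y = 0 ∧ z = 0 := by
  haveI : Fact p.Prime := ⟨hp⟩
  intro n
  induction n using Nat.strong_induction_on with
  | _ n ih =>
    intro x y z hn heq
    rcases Nat.eq_zero_or_pos n with h0 | hpos
    · subst h0; omega
    -- reduce mod p
    have hmod : ((z : ZMod p)) ^ 2 = (q : ZMod p) * (y : ZMod p) ^ 2 := by
      have := congrArg (fun t : ℤ => (t : ZMod p)) heq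
      push_cast at this
      simpa [ZMod.natCast_self] using this
    have hy : (y : ZMod p) = 0 := by
      by_contra hy0
      apply hqns
      refine ⟨(z : ZMod p) * ((y : ZMod p))⁻¹, ?_⟩
      field_simp
      linear_combination -hmod
    have hz : (z : ZMod p) = 0 := by
      have : ((z : ZMod p)) ^ 2 = 0 := by rw [hmod, hy]; ring
      exact pow_eq_zero_iff (by norm_num) |>.mp this
    have hpy : (p : ℤ) ∣ y := (ZMod.intCast_zmod_eq_zero_iff_dvd y p).mp hy
    have hpz : (p : ℤ) ∣ z := (ZMod.intCast_zmod_eq_zero_iff_dvd z p).mp hz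
    obtain ⟨b, rfl⟩ := hpy
    obtain ⟨c, rfl⟩ := hpz
    have hp0 : (p : ℤ) ≠ 0 := by exact_mod_cast hp.ne_zero
    have heq2 : (p : ℤ) * c ^ 2 = x ^ 2 + (q : ℤ) * ((p : ℤ) * b ^ 2) := by
      have : (p : ℤ) * ((p : ℤ) * c ^ 2) =
          (p : ℤ) * (x ^ 2 + (q : ℤ) * ((p : ℤ) * b ^ 2)) := by ring_nf; ring_nf at heq; linarith
      exact mul_left_cancel₀ hp0 this
    have hpx : (p : ℤ) ∣ x := by
      have hdvd : (p : ℤ) ∣ x ^ 2 := ⟨c ^ 2 - (q : ℤ) * b ^ 2, by linarith [heq2]⟩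
      exact (Int.Prime.dvd_pow' (by exact_mod_cast hp) hdvd)
    obtain ⟨a, rfl⟩ := hpx
    have heq3 : c ^ 2 = (p : ℤ) * a ^ 2 + (q : ℤ) * b ^ 2 := by
      have : (p : ℤ) * (c ^ 2) = (p : ℤ) * ((p : ℤ) * a ^ 2 + (q : ℤ) * b ^ 2) := by
        ring_nf; ring_nf at heq2; linarith
      exact mul_left_cancel₀ hp0 this
    have hm : a.natAbs + b.natAbs + c.natAbs < n := by
      have hxa : ((p : ℤ) * a).natAbs = p * a.natAbs := by
        rw [Int.natAbs_mul, Int.natAbs_natCast]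
      have hyb : ((p : ℤ) * b).natAbs = p * b.natAbs := by
        rw [Int.natAbs_mul, Int.natAbs_natCast]
      have hzc : ((p : ℤ) * c).natAbs = p * c.natAbs := by
        rw [Int.natAbs_mul, Int.natAbs_natCast]
      have hp2 : 2 ≤ p := hp.two_le
      have hnm : n = p * (a.natAbs + b.natAbs + c.natAbs) := by
        rw [← hn, hxa, hyb, hzc]; ring
      have hm0 : 0 < a.natAbs + b.natAbs + c.natAbs := by
        rcases Nat.eq_zero_or_pos (a.natAbs + b.natAbs + c.natAbs) with h | h
        · exfalso; rw [h, Nat.mul_zero] at hnm; omega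
        · exact h
      calc a.natAbs + b.natAbs + c.natAbs = 1 * (a.natAbs + b.natAbs + c.natAbs) := by ring
        _ < p * (a.natAbs + b.natAbs + c.natAbs) := (Nat.mul_lt_mul_right hm0).mpr (by omega)
        _ = n := hnm.symm
    obtain ⟨ha, hb, hc⟩ := ih _ hm a b c rfl heq3
    subst ha; subst hb; subst hc
    simp

/-- Let `p, q` be odd primes with `p ≡ 1 (mod 4)` and `q` a quadratic non-residue mod `p`.
Then (i) for every prime `ℓ` some twist `t·z² = p·x² + q·y²` with `t ∈ ℤ_ℓˣ` has a
primitive `ℤ_ℓ`-point; (ii) some twist `ε·z² = p·x² + q·y²` with `ε = ±1` has a nontrivial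
real point; yet (iii) for each `ε = ±1` the only rational solution of
`ε·z² = p·x² + q·y²` is `(0, 0, 0)`. -/
theorem stmt_10 (p q : ℕ) (hp : p.Prime) (hq : q.Prime) (hpodd : Odd p) (hqodd : Odd q)
    (hp4 : p % 4 = 1) (hqns : ¬IsSquare ((q : ZMod p))) :
    (∀ (ℓ : ℕ) [Fact ℓ.Prime],
      ∃ t x y z : ℤ_[ℓ],
        IsUnit t ∧
        ¬((ℓ : ℤ_[ℓ]) ∣ x ∧ (ℓ : ℤ_[ℓ]) ∣ y ∧ (ℓ : ℤ_[ℓ]) ∣ z) ∧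
        t * z ^ 2 = (p : ℤ_[ℓ]) * x ^ 2 + (q : ℤ_[ℓ]) * y ^ 2) ∧
    (∃ ε : ℤ, (ε = 1 ∨ ε = -1) ∧
      ∃ x y z : ℝ, (x, y, z) ≠ (0, 0, 0) ∧
        (ε : ℝ) * z ^ 2 = (p : ℝ) * x ^ 2 + (q : ℝ) * y ^ 2) ∧
    (∀ ε : ℤ, ε = 1 ∨ ε = -1 →
      ∀ x y z : ℚ, (ε : ℚ) * z ^ 2 = (p : ℚ) * x ^ 2 + (q : ℚ) * y ^ 2 →
        x = 0 ∧ y = 0 ∧ z = 0) := by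
  have hpq : p ≠ q := by
    rintro rfl
    exact hqns (by simp [ZMod.natCast_self])
  refine ⟨?_, ?_, ?_⟩
  · -- part (i)
    intro ℓ _
    have hℓ : Nat.Prime ℓ := Fact.out
    -- unit lemma
    have unit_of_not_dvd : ∀ m : ℕ, ¬ ℓ ∣ m → IsUnit ((m : ℤ_[ℓ])) := by
      intro m hm
      rw [PadicInt.isUnit_iff]
      have h1 : ¬ ‖((m : ℤ) : ℤ_[ℓ])‖ < 1 := by
        rw [PadicInt.norm_int_lt_one_iff_dvd]
        exact_mod_cast hm
      have h2 : ‖((m : ℤ) : ℤ_[ℓ])‖ ≤ 1 := PadicInt.norm_le_one _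
      have : ‖((m : ℤ) : ℤ_[ℓ])‖ = 1 := le_antisymm h2 (not_lt.mp h1)
      simpa using this
    have hprim : ¬ (ℓ : ℤ_[ℓ]) ∣ (1 : ℤ_[ℓ]) := by
      intro hd
      have hu := PadicInt.isUnit_iff.mp (isUnit_of_dvd_one hd)
      rw [PadicInt.norm_p] at hu
      have h2 : (2 : ℝ) ≤ ℓ := by exact_mod_cast hℓ.two_le
      have : (ℓ : ℝ)⁻¹ < 1 := by
        rw [inv_lt_one_iff₀]; right; linarith
      linarith [hu ▸ this]
    by_cases hℓq : ℓ = q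
    · subst hℓq
      refine ⟨(p : ℤ_[ℓ]), 1, 0, 1, unit_of_not_dvd p ?_, ?_, by ring⟩
      · intro hd
        exact hpq ((Nat.prime_dvd_prime_iff_eq hℓ hp).mp hd).symm
      · rintro ⟨-, -, hd⟩; exact hprim hd
    · refine ⟨(q : ℤ_[ℓ]), 0, 1, 1, unit_of_not_dvd q ?_, ?_, by ring⟩
      · intro hd
        exact hℓq ((Nat.prime_dvd_prime_iff_eq hℓ hq).mp hd)
      · rintro ⟨-, -, hd⟩; exact hprim hd
  · -- part (ii)
    refine ⟨1, Or.inl rfl, 1, 0, Real.sqrt p, ?_, ?_⟩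
    · simp
    · rw [Real.sq_sqrt (by positivity)]
      push_cast; ring
  · -- part (iii)
    intro ε hε x y z heq
    have hp0 : (0 : ℚ) < p := by exact_mod_cast hp.pos
    have hq0 : (0 : ℚ) < q := by exact_mod_cast hq.pos
    rcases hε with rfl | rfl
    · -- ε = 1
      push_cast at heq
      set X : ℤ := x.num * y.den * z.den with hX
      set Y : ℤ := y.num * x.den * z.den with hY
      set Z : ℤ := z.num * x.den * y.den with hZ
      have hxd : ((x.den : ℚ)) ≠ 0 := by exact_mod_cast x.den_nz
      have hyd : ((y.den : ℚ)) ≠ 0 := by exact_mod_cast y.den_nz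
      have hzd : ((z.den : ℚ)) ≠ 0 := by exact_mod_cast z.den_nz
      have hxn : (x.num : ℚ) = x * x.den := by
        have h := Rat.num_div_den x; rw [div_eq_iff hxd] at h; exact h
      have hyn : (y.num : ℚ) = y * y.den := by
        have h := Rat.num_div_den y; rw [div_eq_iff hyd] at h; exact h
      have hzn : (z.num : ℚ) = z * z.den := by
        have h := Rat.num_div_den z; rw [div_eq_iff hzd] at h; exact h
      have hQ : ((Z : ℚ)) ^ 2 = (p : ℚ) * (X : ℚ) ^ 2 + (q : ℚ) * (Y : ℚ) ^ 2 := by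
        rw [hX, hY, hZ]
        push_cast
        rw [hxn, hyn, hzn]
        linear_combination ((x.den : ℚ) * y.den * z.den) ^ 2 * heq
      have hZint : Z ^ 2 = (p : ℤ) * X ^ 2 + (q : ℤ) * Y ^ 2 := by exact_mod_cast hQ
      obtain ⟨hX0, hY0, hZ0⟩ := key p q hp hqns _ X Y Z rfl hZint
      have hx0 : x.num = 0 := by
        have := hX0
        rw [hX] at this
        have hd : (y.den : ℤ) * z.den ≠ 0 := by positivity
        exact by
          rcases mul_eq_zero.mp this with h | h
          · rcases mul_eq_zero.mp h with h' | h'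
            · exact h'
            · exact absurd h' (by positivity)
          · exact absurd h (by positivity)
      have hy0 : y.num = 0 := by
        rw [hY] at hY0
        rcases mul_eq_zero.mp hY0 with h | h
        · rcases mul_eq_zero.mp h with h' | h'
          · exact h'
          · exact absurd h' (by positivity)
        · exact absurd h (by positivity)
      have hz0 : z.num = 0 := by
        rw [hZ] at hZ0
        rcases mul_eq_zero.mp hZ0 with h | h
        · rcases mul_eq_zero.mp h with h' | h'
          · exact h'
          · exact absurd h' (by positivity)
        · exact absurd h (by positivity)
      exact ⟨Rat.num_eq_zero.mp hx0, Rat.num_eq_zero.mp hy0, Rat.num_eq_zero.mp hz0⟩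
    · -- ε = -1
      push_cast at heq
      have hx2 : x ^ 2 = 0 := by nlinarith [sq_nonneg x, sq_nonneg y, sq_nonneg z]
      have hy2 : y ^ 2 = 0 := by nlinarith [sq_nonneg x, sq_nonneg y, sq_nonneg z]
      have hz2 : z ^ 2 = 0 := by nlinarith [sq_nonneg x, sq_nonneg y, sq_nonneg z]
      exact ⟨pow_eq_zero_iff (n := 2) (by norm_num) |>.mp hx2,
             pow_eq_zero_iff (n := 2) (by norm_num) |>.mp hy2,
             pow_eq_zero_iff (n := 2) (by norm_num) |>.mp hz2⟩
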